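/- arXiv:1508.06687 — 11 statements merged into one kernel-verified Lean document; each statement's English description precedes it below -/
import Mathlib

section
/- A family of vectors {φ_i}_{i=1}^M in R^N does phase retrieval if and only if it has the complement property, i.e., for every subset S ⊆ {1,...,M}, either {φ_i}_{i∈S} spans R^N or {φ_i}_{i∈S^c} spans R^N. -/
open Submodule

lemma aux_zero {N : ℕ} (s : Set (EuclideanSpace ℝ (Fin N))) (h : span ℝ s = ⊤)
    (v : EuclideanSpace ℝ (Fin N)) (hv : ∀ w ∈ s, (inner ℝ v w : ℝ) = 0) : v = 0 := by
  have hle : span ℝ s ≤ LinearMap.ker (innerSL ℝ v).toLinearMap := by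
    rw [Submodule.span_le]
    intro w hw
    simpa using hv w hw
  rw [h] at hle
  have h2 : (inner ℝ v v : ℝ) = 0 := by simpa using hle (Submodule.mem_top (x := v))
  exact inner_self_eq_zero.mp h2

lemma aux_exists {N : ℕ} (s : Set (EuclideanSpace ℝ (Fin N))) (h : span ℝ s ≠ ⊤) :
    ∃ v : EuclideanSpace ℝ (Fin N), v ≠ 0 ∧ ∀ w ∈ s, (inner ℝ v w : ℝ) = 0 := by
  have hb : (span ℝ s)ᗮ ≠ ⊥ := fun hbot => h (Submodule.orthogonal_eq_bot_iff.mp hbot)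
  obtain ⟨v, hv, hv0⟩ := (Submodule.ne_bot_iff _).mp hb
  exact ⟨v, hv0, fun w hw =>
    (Submodule.mem_orthogonal' _ _).mp hv w (Submodule.subset_span hw)⟩

theorem stmt_0 (M N : ℕ) (φ : Fin M → EuclideanSpace ℝ (Fin N)) :
    (∀ x y : EuclideanSpace ℝ (Fin N),
        (∀ i, |(inner ℝ x (φ i) : ℝ)| = |(inner ℝ y (φ i) : ℝ)|) → x = y ∨ x = -y)
    ↔ (∀ S : Finset (Fin M),
        Submodule.span ℝ (φ '' (S : Set (Fin M))) = ⊤ ∨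
        Submodule.span ℝ (φ '' ((Sᶜ : Finset (Fin M)) : Set (Fin M))) = ⊤) := by
  classical
  constructor
  · intro hPR S
    by_contra hc
    push_neg at hc
    obtain ⟨h1, h2⟩ := hc
    obtain ⟨u, hu0, hu⟩ := aux_exists _ h1
    obtain ⟨v, hv0, hv⟩ := aux_exists _ h2
    have key : ∀ i, |(inner ℝ (u + v) (φ i) : ℝ)| = |(inner ℝ (u - v) (φ i) : ℝ)| := by
      intro i
      by_cases hi : i ∈ S
      · have hu' : (inner ℝ u (φ i) : ℝ) = 0 := hu _ ⟨i, by simpa using hi, rfl⟩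
        rw [inner_add_left, inner_sub_left, hu']
        simp [abs_neg]
      · have hv' : (inner ℝ v (φ i) : ℝ) = 0 := hv _ ⟨i, by simpa using hi, rfl⟩
        rw [inner_add_left, inner_sub_left, hv']
        simp
    rcases hPR _ _ key with h | h
    · apply hv0
      have h2v : (2 : ℝ) • v = 0 := by
        rw [two_smul]; rw [show v + v = u + v - (u - v) by abel, h]; abel
      simpa using smul_eq_zero.mp h2v |>.resolve_left (by norm_num)
    · apply hu0
      have h2u : (2 : ℝ) • u = 0 := by
        rw [two_smul]; rw [show u + u = u + v + (u - v) by abel, h]; abel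
      simpa using smul_eq_zero.mp h2u |>.resolve_left (by norm_num)
  · intro hCP x y habs
    set S : Finset (Fin M) :=
      Finset.univ.filter (fun i => (inner ℝ x (φ i) : ℝ) = inner ℝ y (φ i)) with hS
    rcases hCP S with h | h
    · left
      have hxy : x - y = 0 := by
        apply aux_zero _ h
        rintro w ⟨i, hi, rfl⟩
        have : (inner ℝ x (φ i) : ℝ) = inner ℝ y (φ i) := by
          simpa [hS] using hi
        rw [inner_sub_left, this, sub_self]
      exact sub_eq_zero.mp hxy
    · right
      have hxy : x + y = 0 := by
        apply aux_zero _ h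
        rintro w ⟨i, hi, rfl⟩
        have hiS : i ∉ S := by simpa using hi
        have hne : (inner ℝ x (φ i) : ℝ) ≠ inner ℝ y (φ i) := by
          simpa [hS] using hiS
        have := abs_eq_abs.mp (habs i)
        rcases this with h' | h'
        · exact absurd h' hne
        · rw [inner_add_left, h', neg_add_cancel]
      exact eq_neg_of_add_eq_zero_left hxy
end

section
/- If a frame {φ_i}_{i=1}^{2N−1} in R^N has the complement property, then it is full spark. -/
theorem stmt_2 (N : ℕ) (φ : Fin (2 * N - 1) → EuclideanSpace ℝ (Fin N))
    (hframe : Submodule.span ℝ (Set.range φ) = ⊤)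
    (hcp : ∀ S : Finset (Fin (2 * N - 1)),
      Submodule.span ℝ (φ '' (S : Set (Fin (2 * N - 1)))) = ⊤ ∨
      Submodule.span ℝ (φ '' ((Sᶜ : Finset (Fin (2 * N - 1))) : Set (Fin (2 * N - 1)))) = ⊤) :
    ∀ S : Finset (Fin (2 * N - 1)), S.card = N →
      LinearIndependent ℝ (fun i : S => φ i) := by
  classical
  intro S hS
  rcases Nat.eq_zero_or_pos N with hN | hN
  · have : IsEmpty S := by
      rw [Finset.isEmpty_coe_sort, ← Finset.card_eq_zero, hS, hN]
    exact linearIndependent_empty_type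
  have hrange : Set.range (fun i : S => φ i) = φ '' (S : Set (Fin (2 * N - 1))) := by
    exact (Set.image_eq_range _ _).symm
  rw [linearIndependent_iff_card_eq_finrank_span, hrange]
  have hcard : Fintype.card S = N := by simp [hS]
  rw [hcard]
  -- complement has card N - 1 < N, so its span is not ⊤
  have hdim : Module.finrank ℝ (EuclideanSpace ℝ (Fin N)) = N := by
    simp [finrank_euclideanSpace]
  have hcomp : Submodule.span ℝ (φ '' ((Sᶜ : Finset (Fin (2 * N - 1))) : Set (Fin (2 * N - 1)))) ≠ ⊤ := by
    intro htop
    have hle : Module.finrank ℝ (Submodule.span ℝ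
        (φ '' ((Sᶜ : Finset (Fin (2 * N - 1))) : Set (Fin (2 * N - 1))))) ≤ (Sᶜ : Finset _).card := by
      have h1 := finrank_span_finset_le_card (R := ℝ) ((Sᶜ : Finset (Fin (2 * N - 1))).image φ)
      rw [Finset.coe_image] at h1
      exact h1.trans (Finset.card_image_le)
    rw [htop, finrank_top, hdim] at hle
    have hccard : (Sᶜ : Finset (Fin (2 * N - 1))).card = N - 1 := by
      rw [Finset.card_compl, hS]
      simp [Fintype.card_fin]
      omega
    omega
  have hspan := (hcp S).resolve_right hcomp
  -- now span φ''S = ⊤, so finrank = N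
  unfold Set.finrank
  rw [hspan, finrank_top, hdim]
end

section
/- Let P be an orthogonal projection of rank N on an M-dimensional Hilbert space H with orthonormal basis {e_i}_{i=1}^M. Then {Pe_i}_{i=1}^M is full spark (as a family in the N-dimensional space P(H)) if and only if for every subset I ⊆ {1,...,M} with |I| = M−N, the vectors {(I−P)e_i}_{i∈I} span (I−P)(H). -/
open Submodule in
theorem stmt_4 {𝕜 : Type*} [RCLike 𝕜] {H : Type*} [NormedAddCommGroup H]
    [InnerProductSpace 𝕜 H] [FiniteDimensional 𝕜 H]
    (M N : ℕ) (hdim : Module.finrank 𝕜 H = M)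
    (e : OrthonormalBasis (Fin M) 𝕜 H)
    (P : H →ₗ[𝕜] H) (hsym : P.IsSymmetric) (hidem : P ∘ₗ P = P)
    (hrank : Module.finrank 𝕜 (LinearMap.range P) = N) :
    (∀ S : Finset (Fin M), S.card = N →
        LinearIndependent 𝕜 (fun i : S => P (e i)))
    ↔ (∀ I : Finset (Fin M), I.card = M - N →
        Submodule.span 𝕜 ((fun i => e i - P (e i)) '' (I : Set (Fin M)))
          = LinearMap.range (LinearMap.id - P)) := by
  classical
  have hPP : ∀ x, P (P x) = P x := fun x => congrFun (congrArg DFunLike.coe hidem) x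
  set Q : H →ₗ[𝕜] H := LinearMap.id - P with hQdef
  have hQ : ∀ x, Q x = x - P x := fun x => rfl
  have hNM : N ≤ M := by
    rw [← hrank, ← hdim]; exact Submodule.finrank_le _
  -- ker P = (range P)ᗮ
  have hkerP : LinearMap.ker P = (LinearMap.range P)ᗮ := by
    ext x
    simp only [LinearMap.mem_ker, Submodule.mem_orthogonal]
    constructor
    · rintro hx _ ⟨y, rfl⟩
      rw [hsym y x, hx, inner_zero_right]
    · intro h
      have h1 : (inner 𝕜 (P x) x : 𝕜) = 0 := h (P x) ⟨x, rfl⟩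
      have h2 : (inner 𝕜 (P x) (P x) : 𝕜) = 0 := by
        calc (inner 𝕜 (P x) (P x) : 𝕜) = inner 𝕜 x (P (P x)) := hsym x (P x)
          _ = inner 𝕜 x (P x) := by rw [hPP]
          _ = inner 𝕜 (P x) x := (hsym x x).symm
          _ = 0 := h1
      exact inner_self_eq_zero.mp h2
  have hkerPorth : (LinearMap.ker P)ᗮ = LinearMap.range P := by
    rw [hkerP, Submodule.orthogonal_orthogonal]
  -- ker Q = range P
  have hkerQ : LinearMap.ker Q = LinearMap.range P := by
    ext x
    constructor
    · intro hx
      have : x - P x = 0 := hx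
      exact ⟨x, by rw [eq_comm, ← sub_eq_zero]; exact this⟩
    · rintro ⟨y, rfl⟩
      simp [LinearMap.mem_ker, hQ, hPP]
  -- finrank of spans of sub-families of e
  have hfr : ∀ T : Finset (Fin M),
      Module.finrank 𝕜 (span 𝕜 (e '' (T : Set (Fin M)))) = T.card := by
    intro T
    have hli0 : LinearIndependent 𝕜 (fun i : (T : Set (Fin M)) => e i) :=
      e.orthonormal.linearIndependent.comp _ Subtype.coe_injective
    have hli : LinearIndependent 𝕜 ((↑) : (e '' (T : Set (Fin M))) → H) := LinearIndepOn.id_image (v := ⇑e) (s := (T : Set (Fin M))) hli0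
    rw [finrank_span_set_eq_card hli, Set.toFinset_image]
    rw [Finset.card_image_of_injective _ e.orthonormal.linearIndependent.injective]
    simp
  -- orthogonal of span of sub-family is span of complement
  have horth : ∀ T : Finset (Fin M),
      (span 𝕜 (e '' (T : Set (Fin M))))ᗮ = span 𝕜 (e '' ((Tᶜ : Finset (Fin M)) : Set (Fin M))) := by
    intro T
    have hle : span 𝕜 (e '' ((Tᶜ : Finset (Fin M)) : Set (Fin M)))
        ≤ (span 𝕜 (e '' (T : Set (Fin M))))ᗮ := by
      rw [← Submodule.isOrtho_iff_le]
      refine (Submodule.isOrtho_span.mpr ?_).symm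
      rintro _ ⟨i, hi, rfl⟩ _ ⟨j, hj, rfl⟩
      have hij : i ≠ j := by
        rintro rfl; exact (Finset.mem_compl.mp hj) hi
      exact e.orthonormal.2 hij
    refine (Submodule.eq_of_le_of_finrank_eq hle ?_).symm
    rw [hfr]
    have h1 := Submodule.finrank_add_finrank_orthogonal
      (K := span 𝕜 (e '' (T : Set (Fin M))))
    rw [hfr T, hdim] at h1
    have h3 : Tᶜ.card = M - T.card := by simp [Finset.card_compl]
    have h4 : T.card ≤ M := by simpa using T.card_le_univ
    omega
  -- LHS for a finset S is equivalent to span(e''S) ⊓ ker P = ⊥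
  have hLHS : ∀ S : Finset (Fin M),
      LinearIndependent 𝕜 (fun i : S => P (e i))
        ↔ span 𝕜 (e '' (S : Set (Fin M))) ⊓ LinearMap.ker P = ⊥ := by
    intro S
    have hrange : Set.range (fun i : S => e i) = e '' (S : Set (Fin M)) := by
      ext x; simp
    constructor
    · intro hli
      rw [eq_bot_iff]
      rintro x ⟨hx1, hx2⟩
      rw [← hrange] at hx1
      obtain ⟨c, hc⟩ := (mem_span_range_iff_exists_fun 𝕜).mp hx1
      have hPx : ∑ i : S, c i • P (e i) = 0 := by
        have h5 := congrArg P hc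
        rw [map_sum] at h5
        simp only [map_smul] at h5
        rw [h5]
        exact LinearMap.mem_ker.mp hx2
      have hc0 : ∀ i, c i = 0 := Fintype.linearIndependent_iff.mp hli c hPx
      have hx0 : x = 0 := by rw [← hc]; simp [hc0]
      simp [hx0]
    · intro hdisj
      have hindep : LinearIndependent 𝕜 (fun i : S => e i) :=
        e.orthonormal.linearIndependent.comp _ Subtype.coe_injective
      have := hindep.map (f := P) ?_
      · exact this
      · rw [hrange, disjoint_iff, hdisj]
  -- RHS for a finset I is equivalent to span(e''I) ⊔ range P = ⊤
  have hRHS : ∀ I : Finset (Fin M),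
      (span 𝕜 ((fun i => e i - P (e i)) '' (I : Set (Fin M)))
          = LinearMap.range (LinearMap.id - P))
        ↔ span 𝕜 (e '' (I : Set (Fin M))) ⊔ LinearMap.range P = ⊤ := by
    intro I
    have himg : (fun i => e i - P (e i)) '' (I : Set (Fin M))
        = Q '' (e '' (I : Set (Fin M))) := by
      rw [Set.image_image]
      rfl
    have hmap : span 𝕜 ((fun i => e i - P (e i)) '' (I : Set (Fin M)))
        = Submodule.map Q (span 𝕜 (e '' (I : Set (Fin M)))) := by
      rw [himg, Submodule.span_image]
    rw [hmap, ← hkerQ]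
    show Submodule.map Q _ = LinearMap.range Q ↔ _
    constructor
    · intro h
      rw [eq_top_iff]
      intro x _
      have hQx : Q x ∈ Submodule.map Q (span 𝕜 (e '' (I : Set (Fin M)))) := by
        rw [h]; exact ⟨x, rfl⟩
      obtain ⟨u, hu, huQ⟩ := hQx
      have hxu : x - u ∈ LinearMap.ker Q := by
        rw [LinearMap.mem_ker, map_sub, huQ, sub_self]
      have hx : x = u + (x - u) := by abel
      rw [hx]
      exact Submodule.add_mem_sup hu hxu
    · intro h
      have h2 : Submodule.map Q (LinearMap.ker Q) = ⊥ := by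
        rw [eq_bot_iff]
        rintro x ⟨y, hy, rfl⟩
        simpa using LinearMap.mem_ker.mp hy
      rw [← Submodule.map_top, ← h, Submodule.map_sup, h2, sup_bot_eq]
  -- bridge
  have hbridge : ∀ T : Finset (Fin M),
      (span 𝕜 (e '' (T : Set (Fin M))) ⊓ LinearMap.ker P = ⊥)
        ↔ (span 𝕜 (e '' ((Tᶜ : Finset (Fin M)) : Set (Fin M))) ⊔ LinearMap.range P = ⊤) := by
    intro T
    rw [← horth T, ← hkerPorth]
    constructor
    · intro h
      rw [← Submodule.orthogonal_eq_bot_iff, ← Submodule.inf_orthogonal,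
        Submodule.orthogonal_orthogonal, Submodule.orthogonal_orthogonal]
      exact h
    · intro h
      rw [← Submodule.orthogonal_eq_bot_iff, ← Submodule.inf_orthogonal,
        Submodule.orthogonal_orthogonal, Submodule.orthogonal_orthogonal] at h
      exact h
  constructor
  · intro hA I hI
    have hS : Iᶜ.card = N := by
      have : Iᶜ.card = M - I.card := by simp [Finset.card_compl]
      have h4 : I.card ≤ M := by simpa using I.card_le_univ
      omega
    have h1 := (hLHS Iᶜ).mp (hA Iᶜ hS)
    rw [hRHS I]
    have h2 := (hbridge Iᶜ).mp h1
    rwa [compl_compl] at h2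
  · intro hB S hS
    have hI : Sᶜ.card = M - N := by
      simp [Finset.card_compl, hS]
    have h1 := (hRHS Sᶜ).mp (hB Sᶜ hI)
    rw [hLHS S]
    exact (hbridge S).mpr h1
end

section
/- Let {φ_i}_{i=1}^N be a basis of an N-dimensional Hilbert space H with dual basis {φ_i^*}_{i=1}^N (so ⟨φ_i^*, φ_j⟩ = δ_{ij}), and let P be an orthogonal projection on H of rank M. For any subset I ⊆ {1,...,N}: the set {Pφ_i}_{i∈I} spans P(H) if and only if {(I−P)φ_i^*}_{i∈I^c} is linearly independent. -/
theorem stmt_5 {𝕜 : Type*} [RCLike 𝕜] {H : Type*} [NormedAddCommGroup H]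
    [InnerProductSpace 𝕜 H] [FiniteDimensional 𝕜 H]
    (N M : ℕ) (hdim : Module.finrank 𝕜 H = N)
    (φ : Module.Basis (Fin N) 𝕜 H) (ψ : Fin N → H)
    (hdual : ∀ i j, (inner 𝕜 (ψ i) (φ j) : 𝕜) = if i = j then 1 else 0)
    (P : H →ₗ[𝕜] H) (hsym : P.IsSymmetric) (hidem : P ∘ₗ P = P)
    (hrank : Module.finrank 𝕜 (LinearMap.range P) = M)
    (I : Finset (Fin N)) :
    Submodule.span 𝕜 ((fun i => P (φ i)) '' (I : Set (Fin N))) = LinearMap.range P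
    ↔ LinearIndependent 𝕜 (fun i : (Iᶜ : Finset (Fin N)) => ψ i - P (ψ i)) := by
  classical
  have hdual' : ∀ i j, (inner 𝕜 (φ i) (ψ j) : 𝕜) = if i = j then 1 else 0 := by
    intro i j
    rw [← inner_conj_symm, hdual]
    by_cases h : i = j <;> simp [h, eq_comm]
  have hPfix : ∀ v : H, v ∈ LinearMap.range P → P v = v := by
    rintro _ ⟨x, rfl⟩
    simpa using LinearMap.congr_fun hidem x
  set W : Submodule 𝕜 H := Submodule.span 𝕜 ((fun i => P (φ i)) '' (I : Set (Fin N))) with hWdef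
  set V : Submodule 𝕜 H := LinearMap.range P with hVdef
  have hWV : W ≤ V := by
    rw [hWdef, Submodule.span_le]
    rintro _ ⟨i, hi, rfl⟩
    exact ⟨φ i, rfl⟩
  have hmemW : ∀ v : H, v ∈ Wᗮ ↔ ∀ i ∈ I, (inner 𝕜 (P (φ i)) v : 𝕜) = 0 := by
    intro v
    constructor
    · intro hv i hi
      exact hv _ (Submodule.subset_span ⟨i, hi, rfl⟩)
    · intro h u hu
      induction hu using Submodule.span_induction with
      | mem u hu => obtain ⟨i, hi, rfl⟩ := hu; exact h i hi
      | zero => simp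
      | add u w _ _ hu hw => simp [inner_add_left, hu, hw]
      | smul c u _ hu => simp [inner_smul_left, hu]
  have hψli : LinearIndependent 𝕜 ψ := by
    rw [Fintype.linearIndependent_iff]
    intro g hg k
    have := congrArg (fun v => (inner 𝕜 (φ k) v : 𝕜)) hg
    simpa [inner_sum, inner_smul_right, hdual', Finset.sum_ite_eq] using this
  have hcard : Fintype.card (Fin N) = Module.finrank 𝕜 H := by simp [hdim]
  let bψ : Module.Basis (Fin N) 𝕜 H :=
    Module.Basis.mk hψli (hψli.span_eq_top_of_card_eq_finrank' hcard).ge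
  have hbψ : ⇑bψ = ψ := Module.Basis.coe_mk _ _
  have hrepr : ∀ (v : H) (k : Fin N), bψ.repr v k = (inner 𝕜 (φ k) v : 𝕜) := by
    intro v k
    conv_rhs => rw [← bψ.sum_repr v]
    simp [inner_sum, inner_smul_right, hbψ, hdual', Finset.sum_ite_eq]
  have hexp : ∀ v : H, ∑ j, (inner 𝕜 (φ j) v : 𝕜) • ψ j = v := by
    intro v
    conv_rhs => rw [← bψ.sum_repr v]
    simp [hrepr, hbψ]
  have hkey : W = V ↔ V ⊓ Wᗮ = ⊥ := by
    constructor
    · intro h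
      rw [h]
      exact V.orthogonal_disjoint.eq_bot
    · intro h
      have h2 := Submodule.sup_orthogonal_inf_of_hasOrthogonalProjection hWV
      rw [inf_comm] at h
      rw [h, sup_bot_eq] at h2
      exact h2
  rw [show (Submodule.span 𝕜 ((fun i => P (φ i)) '' (I : Set (Fin N))) = LinearMap.range P)
      = (W = V) from rfl, hkey]
  constructor
  · -- trivial complement → linear independence
    intro hbot
    rw [Fintype.linearIndependent_iff]
    intro g hg
    set v : H := ∑ i : (Iᶜ : Finset (Fin N)), g i • ψ i with hv
    have hPv : P v = v := by
      have h1 : v - P v = 0 := by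
        rw [hv, map_sum, ← Finset.sum_sub_distrib]
        simpa [smul_sub, map_smul] using hg
      exact (sub_eq_zero.mp h1).symm
    have hinner : ∀ k : Fin N, (inner 𝕜 (φ k) v : 𝕜)
        = ∑ j : (Iᶜ : Finset (Fin N)), g j * (if k = (j : Fin N) then 1 else 0) := by
      intro k; simp [hv, inner_sum, inner_smul_right, hdual']
    have hvW : v ∈ Wᗮ := by
      rw [hmemW]
      intro i hi
      rw [hsym, hPv, hinner]
      apply Finset.sum_eq_zero
      intro j _
      have hne : i ≠ (j : Fin N) := by
        have hj := j.2
        simp only [Finset.mem_compl] at hj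
        rintro rfl; exact hj hi
      simp [hne]
    have hv0 : v = 0 := by
      have hmem : v ∈ V ⊓ Wᗮ := ⟨⟨v, hPv⟩, hvW⟩
      rw [hbot] at hmem
      simpa using hmem
    intro i
    have h3 := hinner i
    rw [hv0, inner_zero_right, Finset.sum_eq_single i] at h3
    · simpa using h3.symm
    · intro b _ hb
      have : (i : Fin N) ≠ (b : Fin N) := fun h => hb (Subtype.ext h).symm
      simp [this]
    · intro h; exact absurd (Finset.mem_univ i) h
  · -- linear independence → trivial complement
    intro hli
    rw [Submodule.eq_bot_iff]
    rintro v ⟨hvV, hvW⟩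
    have hPv : P v = v := hPfix v hvV
    have hzero : ∀ i ∈ I, (inner 𝕜 (φ i) v : 𝕜) = 0 := by
      intro i hi
      have h4 := (hmemW v).mp hvW i hi
      rwa [hsym, hPv] at h4
    have hsplit : ∑ j ∈ (Iᶜ : Finset (Fin N)), (inner 𝕜 (φ j) v : 𝕜) • ψ j = v := by
      conv_rhs => rw [← hexp v]
      apply Finset.sum_subset (Finset.subset_univ _)
      intro x _ hx
      rw [hzero x (Finset.notMem_compl.mp hx), zero_smul]
    have e1 : ∑ j : (Iᶜ : Finset (Fin N)), (inner 𝕜 (φ (j : Fin N)) v : 𝕜) • ψ (j : Fin N) = v := by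
      rw [Finset.univ_eq_attach,
        Finset.sum_attach (Iᶜ) (fun j => (inner 𝕜 (φ j) v : 𝕜) • ψ j)]
      exact hsplit
    have hrel : ∑ j : (Iᶜ : Finset (Fin N)),
        (inner 𝕜 (φ (j : Fin N)) v : 𝕜) • (ψ (j : Fin N) - P (ψ (j : Fin N))) = 0 := by
      have h5 : ∑ j : (Iᶜ : Finset (Fin N)),
          (inner 𝕜 (φ (j : Fin N)) v : 𝕜) • (ψ (j : Fin N) - P (ψ (j : Fin N)))
          = (∑ j : (Iᶜ : Finset (Fin N)), (inner 𝕜 (φ (j : Fin N)) v : 𝕜) • ψ (j : Fin N))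
            - P (∑ j : (Iᶜ : Finset (Fin N)), (inner 𝕜 (φ (j : Fin N)) v : 𝕜) • ψ (j : Fin N)) := by
        simp [smul_sub, Finset.sum_sub_distrib, map_sum, map_smul]
      rw [h5, e1, hPv, sub_self]
    have hg0 := Fintype.linearIndependent_iff.mp hli
      (fun j => (inner 𝕜 (φ (j : Fin N)) v : 𝕜)) hrel
    rw [← e1]
    apply Finset.sum_eq_zero
    intro j _
    have := hg0 j
    rw [this, zero_smul]
end

section
/- Let {φ_i}_{i=1}^N be a basis of an N-dimensional Hilbert space H, and let P be an orthogonal projection on H of rank M. Then {Pφ_i}_{i=1}^N is full spark on P(H) if and only if for every subset I ⊆ {1,...,N} with |I| = M, we have span{(I−P)φ_i : i = 1,...,N} ∩ span{φ_i : i ∈ I} = {0}. -/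
theorem stmt_6 {𝕜 : Type*} [RCLike 𝕜] {H : Type*} [NormedAddCommGroup H]
    [InnerProductSpace 𝕜 H] [FiniteDimensional 𝕜 H]
    (N M : ℕ) (hdim : Module.finrank 𝕜 H = N)
    (φ : Module.Basis (Fin N) 𝕜 H)
    (P : H →ₗ[𝕜] H) (hsym : P.IsSymmetric) (hidem : P ∘ₗ P = P)
    (hrank : Module.finrank 𝕜 (LinearMap.range P) = M) :
    (∀ S : Finset (Fin N), S.card = M →
        LinearIndependent 𝕜 (fun i : S => P (φ i)))
    ↔ (∀ I : Finset (Fin N), I.card = M →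
        Submodule.span 𝕜 (Set.range (fun i => φ i - P (φ i)))
          ⊓ Submodule.span 𝕜 (φ '' (I : Set (Fin N))) = ⊥) := by
  have hPP : ∀ x, P (P x) = P x := fun x => congrFun (congrArg DFunLike.coe hidem) x
  set Q : H →ₗ[𝕜] H := LinearMap.id - P with hQ
  have hker : Submodule.span 𝕜 (Set.range (fun i => φ i - P (φ i))) = LinearMap.ker P := by
    apply le_antisymm
    · rw [Submodule.span_le]
      rintro _ ⟨i, rfl⟩
      simp [LinearMap.mem_ker, map_sub, hPP]
    · intro x hx
      rw [LinearMap.mem_ker] at hx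
      have hxq : x = Q x := by simp [hQ, hx]
      rw [hxq]
      have hr : Set.range (fun i => φ i - P (φ i)) = Q '' Set.range φ := by
        rw [← Set.range_comp]
        rfl
      rw [hr, Submodule.span_image, φ.span_eq, Submodule.map_top]
      exact LinearMap.mem_range_self _ x
  have hrng : ∀ S : Finset (Fin N),
      Set.range (fun i : S => φ i) = φ '' (S : Set (Fin N)) := by
    intro S
    ext x
    simp
  constructor
  · intro h I hI
    have hli := h I hI
    have hd := Submodule.range_ker_disjoint (f := P) (v := fun i : I => φ i) hli
    rw [hrng I, disjoint_iff] at hd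
    rw [hker, inf_comm]
    exact hd
  · intro h S hS
    have hli : LinearIndependent 𝕜 (fun i : S => φ i) :=
      φ.linearIndependent.comp _ Subtype.val_injective
    have hd : Disjoint (Submodule.span 𝕜 (Set.range (fun i : S => φ i)))
        (LinearMap.ker P) := by
      rw [hrng S, disjoint_iff, inf_comm, ← hker]
      exact h S hS
    exact hli.map hd
end

section
/- If {φ_i}_{i=1}^M does phase retrieval in a finite-dimensional Hilbert space H, then for every orthogonal projection P on H, the family {Pφ_i}_{i=1}^M does phase retrieval on P(H). -/
theorem stmt_8 {𝕜 : Type*} [RCLike 𝕜] {H : Type*} [NormedAddCommGroup H]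
    [InnerProductSpace 𝕜 H] [FiniteDimensional 𝕜 H]
    (M : ℕ) (φ : Fin M → H)
    (hpr : ∀ x y : H, (∀ i, ‖(inner 𝕜 x (φ i) : 𝕜)‖ = ‖(inner 𝕜 y (φ i) : 𝕜)‖) →
      ∃ c : 𝕜, ‖c‖ = 1 ∧ x = c • y)
    (P : H →ₗ[𝕜] H) (hsym : P.IsSymmetric) (hidem : P ∘ₗ P = P) :
    ∀ x y : H, x ∈ LinearMap.range P → y ∈ LinearMap.range P →
      (∀ i, ‖(inner 𝕜 x (P (φ i)) : 𝕜)‖ = ‖(inner 𝕜 y (P (φ i)) : 𝕜)‖) →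
      ∃ c : 𝕜, ‖c‖ = 1 ∧ x = c • y := by
  intro x y hx hy h
  have fix : ∀ z : H, z ∈ LinearMap.range P → P z = z := by
    rintro z ⟨u, rfl⟩
    have := congrArg (fun f : H →ₗ[𝕜] H => f u) hidem
    simpa using this
  have key : ∀ z : H, z ∈ LinearMap.range P → ∀ i,
      (inner 𝕜 z (P (φ i)) : 𝕜) = inner 𝕜 z (φ i) := by
    intro z hz i
    rw [← hsym z (φ i), fix z hz]
  apply hpr x y
  intro i
  rw [← key x hx i, ← key y hy i]
  exact h i
end

section
/- Let P be an orthogonal projection onto an M-dimensional subspace W of a complex Hilbert space H of dimension N, and let x, y ∈ H. Then ‖Px‖ = ‖Py‖ if and only if there exists an orthonormal basis {φ_1,...,φ_M} of W such that |⟨x,φ_i⟩| = |⟨y,φ_i⟩| for all i = 1,...,M. -/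
open Module

lemma norm_eq_of_inner_norm_eq {E : Type*} [NormedAddCommGroup E] [InnerProductSpace ℂ E]
    {ι : Type*} [Fintype ι] (b : OrthonormalBasis ι ℂ E) (u v : E)
    (h : ∀ i, ‖(inner ℂ u (b i) : ℂ)‖ = ‖(inner ℂ v (b i) : ℂ)‖) : ‖u‖ = ‖v‖ := by
  have hrepr : ∀ (w : E) i, b.repr w i = (inner ℂ (b i) w : ℂ) := fun w i => b.repr_apply_apply w i
  have h' : ∀ i, ‖b.repr u i‖ = ‖b.repr v i‖ := by
    intro i
    rw [hrepr, hrepr, ← inner_conj_symm (b i) u, ← inner_conj_symm (b i) v,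
      RCLike.norm_conj, RCLike.norm_conj]
    exact h i
  rw [← b.repr.norm_map u, ← b.repr.norm_map v, EuclideanSpace.norm_eq, EuclideanSpace.norm_eq]
  congr 1
  exact Finset.sum_congr rfl fun i _ => by rw [h' i]

lemma key_lemma {E : Type*} [NormedAddCommGroup E] [InnerProductSpace ℂ E]
    [FiniteDimensional ℂ E] {M : ℕ} (hM : finrank ℂ E = M) (u v : E)
    (huv : ‖u‖ = ‖v‖) :
    ∃ b : OrthonormalBasis (Fin M) ℂ E,
      ∀ i, ‖(inner ℂ u (b i) : ℂ)‖ = ‖(inner ℂ v (b i) : ℂ)‖ := by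
  have hcard : finrank ℂ E = Fintype.card (Fin M) := by simpa using hM
  set t : ℂ := inner ℂ u v with ht
  set c : ℂ := if t = 0 then 1 else (‖t‖ : ℂ) / t with hc
  have hcnorm : ‖c‖ = 1 := by
    rw [hc]
    split_ifs with h0
    · simp
    · rw [norm_div]
      simp only [Complex.norm_real, norm_norm]
      exact div_self (norm_ne_zero_iff.mpr h0)
  set v' : E := c • v with hv'
  have hvv' : ∀ e : E, ‖(inner ℂ v' e : ℂ)‖ = ‖(inner ℂ v e : ℂ)‖ := by
    intro e
    rw [hv', inner_smul_left]
    simp [hcnorm]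
  have hview : (inner ℂ u v' : ℂ) = (‖t‖ : ℂ) := by
    rw [hv', inner_smul_right, hc]
    split_ifs with h0
    · simp [← ht, h0]
    · rw [← ht]; field_simp
  have hnormv' : ‖v'‖ = ‖u‖ := by
    rw [hv', norm_smul, hcnorm, one_mul, huv]
  set a : E := u + v' with ha
  set d : E := u - v' with hd
  have hab : (inner ℂ a d : ℂ) = 0 := by
    rw [ha, hd, inner_add_left, inner_sub_right, inner_sub_right]
    have h1 : (inner ℂ v' u : ℂ) = (‖t‖ : ℂ) := by
      rw [← inner_conj_symm v' u, hview]
      simp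
    have h2 : (inner ℂ u u : ℂ) = (inner ℂ v' v' : ℂ) := by
      rw [inner_self_eq_norm_sq_to_K, inner_self_eq_norm_sq_to_K, hnormv']
    rw [h1, h2, hview]; ring
  have hda : (inner ℂ d a : ℂ) = 0 := by
    rw [← inner_conj_symm d a, hab]; simp
  suffices hsuff : ∃ b : OrthonormalBasis (Fin M) ℂ E,
      ∀ i, (inner ℂ a (b i) : ℂ) = 0 ∨ (inner ℂ d (b i) : ℂ) = 0 by
    obtain ⟨b, hb⟩ := hsuff
    refine ⟨b, fun i => ?_⟩
    rw [← hvv' (b i)]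
    have hu2 : (inner ℂ u (b i) : ℂ) = ((inner ℂ a (b i) : ℂ) + inner ℂ d (b i)) / 2 := by
      rw [ha, hd, inner_add_left, inner_sub_left]; ring
    have hv2 : (inner ℂ v' (b i) : ℂ) = ((inner ℂ a (b i) : ℂ) - inner ℂ d (b i)) / 2 := by
      rw [ha, hd, inner_add_left, inner_sub_left]; ring
    rcases hb i with h0 | h0 <;> rw [hu2, hv2, h0] <;> simp
  by_cases hd0 : d = 0
  · refine ⟨(stdOrthonormalBasis ℂ E).reindex (finCongr hM), fun i => Or.inr ?_⟩
    rw [hd0, inner_zero_left]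
  by_cases ha0 : a = 0
  · refine ⟨(stdOrthonormalBasis ℂ E).reindex (finCongr hM), fun i => Or.inl ?_⟩
    rw [ha0, inner_zero_left]
  set ea : E := (‖a‖ : ℂ)⁻¹ • a with hea
  set ed : E := (‖d‖ : ℂ)⁻¹ • d with hed
  have hna : ‖ea‖ = 1 := by
    rw [hea, norm_smul]
    simp [norm_ne_zero_iff.mpr ha0]
  have hnd : ‖ed‖ = 1 := by
    rw [hed, norm_smul]
    simp [norm_ne_zero_iff.mpr hd0]
  have head : (inner ℂ ea ed : ℂ) = 0 := by
    rw [hea, hed, inner_smul_left, inner_smul_right, hab]; ring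
  have heda : (inner ℂ ed ea : ℂ) = 0 := by
    rw [← inner_conj_symm ed ea, head]; simp
  have hM2 : 2 ≤ M := by
    have hpair : Orthonormal ℂ ![ea, ed] := by
      rw [orthonormal_iff_ite]
      intro i j
      fin_cases i <;> fin_cases j <;>
        simp [hna, hnd, head, heda, inner_self_eq_norm_sq_to_K]
    have := hpair.linearIndependent.fintype_card_le_finrank
    simpa [hM] using this
  set i0 : Fin M := ⟨0, by omega⟩ with hi0def
  set i1 : Fin M := ⟨1, by omega⟩ with hi1def
  have h01 : i0 ≠ i1 := by simp [hi0def, hi1def, Fin.ext_iff]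
  set w : Fin M → E := fun i => if i = i0 then ea else ed with hw
  have hwo : Orthonormal ℂ (Set.restrict {i0, i1} w) := by
    constructor
    · rintro ⟨i, hi⟩
      rcases hi with rfl | rfl
      · show ‖w i0‖ = 1
        simpa [hw] using hna
      · show ‖w i1‖ = 1
        simpa [hw, h01.symm] using hnd
    · rintro ⟨i, hi⟩ ⟨j, hj⟩ hij
      have hij' : i ≠ j := fun h => hij (Subtype.ext h)
      rcases hi with rfl | rfl <;> rcases hj with rfl | rfl
      · exact absurd rfl hij'
      · show (inner ℂ (w i0) (w i1) : ℂ) = 0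
        simpa [hw, h01.symm] using head
      · show (inner ℂ (w i1) (w i0) : ℂ) = 0
        simpa [hw, h01.symm] using heda
      · exact absurd rfl hij'
  obtain ⟨b, hb⟩ := hwo.exists_orthonormalBasis_extension_of_card_eq hcard
  have hb0 : b i0 = ea := by rw [hb i0 (by simp)]; simp [hw]
  have hb1 : b i1 = ed := by
    rw [hb i1 (by simp)]
    simp [hw, h01.symm]
  have haea : a = (‖a‖ : ℂ) • ea := by
    rw [hea, smul_smul, mul_inv_cancel₀ (Complex.ofReal_ne_zero.mpr (norm_ne_zero_iff.mpr ha0)),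
      one_smul]
  have hded : d = (‖d‖ : ℂ) • ed := by
    rw [hed, smul_smul, mul_inv_cancel₀ (Complex.ofReal_ne_zero.mpr (norm_ne_zero_iff.mpr hd0)),
      one_smul]
  refine ⟨b, fun i => ?_⟩
  by_cases hi0 : i = i0
  · right
    rw [hi0, hb0, hea, inner_smul_right, hda, mul_zero]
  by_cases hi1 : i = i1
  · left
    rw [hi1, hb1, hed, inner_smul_right, hab, mul_zero]
  · left
    rw [haea, inner_smul_left, ← hb0,
      b.orthonormal.2 (fun h : i0 = i => hi0 h.symm), mul_zero]

theorem stmt_10 {H : Type*} [NormedAddCommGroup H]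
    [InnerProductSpace ℂ H] [FiniteDimensional ℂ H]
    (N M : ℕ) (hdim : Module.finrank ℂ H = N)
    (W : Submodule ℂ H) (hW : Module.finrank ℂ W = M)
    (x y : H) :
    ‖(Submodule.orthogonalProjection W x : W)‖ = ‖(Submodule.orthogonalProjection W y : W)‖
    ↔ ∃ φ : Fin M → H,
        Orthonormal ℂ φ ∧ (∀ i, φ i ∈ W) ∧
        Submodule.span ℂ (Set.range φ) = W ∧
        ∀ i, ‖(inner ℂ x (φ i) : ℂ)‖ = ‖(inner ℂ y (φ i) : ℂ)‖ := by
  set u : W := Submodule.orthogonalProjection W x with hu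
  set v : W := Submodule.orthogonalProjection W y with hv
  -- inner ℂ of x with any element of W equals inner ℂ of its projection
  have hinner : ∀ (z : H) (w : W),
      (inner ℂ z (w : H) : ℂ) = (inner ℂ ((Submodule.orthogonalProjection W z : W) : H) (w : H) : ℂ) := by
    intro z w
    have horth : z - (Submodule.orthogonalProjection W z : W) ∈ Wᗮ :=
      W.sub_starProjection_mem_orthogonal z
    have := Submodule.inner_left_of_mem_orthogonal w.2 horth
    rw [inner_sub_left, sub_eq_zero] at this
    exact this
  constructor
  · intro hnorm
    obtain ⟨b, hb⟩ := key_lemma hW u v hnorm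
    refine ⟨fun i => (b i : H), ?_, fun i => (b i).2, ?_, ?_⟩
    · constructor
      · intro i
        show ‖((b i : H))‖ = 1
        rw [Submodule.norm_coe]
        exact b.orthonormal.1 i
      · intro i j hij
        show (inner ℂ ((b i : H)) ((b j : H)) : ℂ) = 0
        rw [← Submodule.coe_inner]
        exact b.orthonormal.2 hij
    · have : Set.range (fun i => ((b i : H))) = ⇑W.subtype '' Set.range b := by
        rw [← Set.range_comp]; rfl
      rw [this, ← Submodule.map_span]
      have hsp : Submodule.span ℂ (Set.range ⇑b) = ⊤ := by
        rw [← OrthonormalBasis.coe_toBasis b]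
        exact b.toBasis.span_eq
      rw [hsp]
      simp [Submodule.map_top, Submodule.range_subtype]
    · intro i
      rw [hinner x (b i), hinner y (b i), ← Submodule.coe_inner, ← Submodule.coe_inner]
      exact hb i
  · rintro ⟨φ, hon, hmem, hspan, hip⟩
    set ψ : Fin M → W := fun i => ⟨φ i, hmem i⟩ with hψ
    have honψ : Orthonormal ℂ ψ := by
      constructor
      · intro i
        show ‖ψ i‖ = 1
        rw [← Submodule.norm_coe]
        exact hon.1 i
      · intro i j hij
        show (inner ℂ (ψ i) (ψ j) : ℂ) = 0
        rw [Submodule.coe_inner]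
        exact hon.2 hij
    have hspanψ : ⊤ ≤ Submodule.span ℂ (Set.range ψ) := by
      intro w _
      have hw : (w : H) ∈ Submodule.span ℂ (Set.range φ) := hspan.symm ▸ w.2
      have : Set.range φ = ⇑W.subtype '' Set.range ψ := by
        rw [← Set.range_comp]; rfl
      rw [this, ← Submodule.map_span] at hw
      obtain ⟨w', hw', hww'⟩ := hw
      have hww : w' = w := Subtype.ext hww'
      exact hww ▸ hw'
    set b : OrthonormalBasis (Fin M) ℂ W := OrthonormalBasis.mk honψ hspanψ with hbdef
    have hbi : ∀ i, b i = ψ i := fun i => by rw [hbdef, OrthonormalBasis.coe_mk]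
    apply norm_eq_of_inner_norm_eq b
    intro i
    rw [hbi, Submodule.coe_inner, Submodule.coe_inner, ← hinner x (ψ i), ← hinner y (ψ i)]
    exact hip i
end

section
/- Subspaces {W_i}_{i=1}^M of a finite-dimensional complex Hilbert space H allow phase retrieval if and only if for every choice of orthonormal bases {φ_{i,j}}_{j=1}^{J_i} of W_i, the combined family {φ_{i,j}} allows phase retrieval in H. -/
open scoped ComplexConjugate

local notation "⟪" x ", " y "⟫" => @inner ℂ _ _ x y

lemma projNorm {H : Type*} [NormedAddCommGroup H] [InnerProductSpace ℂ H]
    [FiniteDimensional ℂ H] (W : Submodule ℂ H) {ι : Type*} [Fintype ι]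
    (b : OrthonormalBasis ι ℂ W) (x : H) :
    ‖(Submodule.orthogonalProjectionOnto W x : W)‖
      = Real.sqrt (∑ j, ‖(inner ℂ x ((b j : H)) : ℂ)‖ ^ 2) := by
  rw [← b.repr.norm_map (Submodule.orthogonalProjectionOnto W x), EuclideanSpace.norm_eq]
  congr 1
  refine Finset.sum_congr rfl fun j _ => ?_
  rw [b.repr_apply_apply, Submodule.inner_orthogonalProjectionOnto_eq_of_mem_left, norm_inner_symm]

lemma exists_matched_basis {E : Type*} [NormedAddCommGroup E] [InnerProductSpace ℂ E]
    [FiniteDimensional ℂ E] (u v : E) (h : ‖u‖ = ‖v‖) :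
    ∃ (n : ℕ) (b : OrthonormalBasis (Fin n) ℂ E),
      ∀ j, ‖(inner ℂ u (b j) : ℂ)‖ = ‖(inner ℂ v (b j) : ℂ)‖ := by
  classical
  by_cases h0 : u + v = 0
  · have hv : v = -u := eq_neg_of_add_eq_zero_right h0
    exact ⟨Module.finrank ℂ E, stdOrthonormalBasis ℂ E, fun j => by
      rw [hv, inner_neg_left, norm_neg]⟩
  · have hn : ‖u + v‖ ≠ 0 := norm_ne_zero_iff.mpr h0
    have hnC : ((‖u + v‖ : ℂ)) ≠ 0 := Complex.ofReal_ne_zero.mpr hn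
    set e1 : E := ((‖u + v‖ : ℂ))⁻¹ • (u + v) with he1
    have he1n : ‖e1‖ = 1 := by
      rw [he1, norm_smul, norm_inv, Complex.norm_real, Real.norm_eq_abs,
        abs_of_nonneg (norm_nonneg _), inv_mul_cancel₀ hn]
    have hon : Orthonormal ℂ ((↑) : ({e1} : Set E) → E) := by
      rw [orthonormal_subtype_iff_ite]
      intro x hx y hy
      simp only [Set.mem_singleton_iff] at hx hy
      subst hx; subst hy
      simp [inner_self_eq_norm_sq_to_K, he1n]
    obtain ⟨s, b, hsub, hb⟩ := hon.exists_orthonormalBasis_extension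
    have he1s : e1 ∈ s := hsub rfl
    set i0 : s := ⟨e1, he1s⟩ with hi0
    have hbi0 : b i0 = e1 := by rw [hb]
    set eqv := Fintype.equivFin s with heqv
    refine ⟨Fintype.card s, b.reindex eqv, fun j => ?_⟩
    rw [OrthonormalBasis.coe_reindex]
    by_cases hj : eqv.symm j = i0
    · rw [Function.comp_apply, hj, hbi0]
      have key : ⟪v, u + v⟫ = conj ⟪u, u + v⟫ := by
        rw [inner_add_right, inner_add_right, map_add, inner_conj_symm, inner_conj_symm,
          inner_self_eq_norm_sq_to_K, inner_self_eq_norm_sq_to_K, h]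
        ring
      rw [he1, inner_smul_right, inner_smul_right, norm_mul, norm_mul, key,
        RCLike.norm_conj]
    · have horth : ⟪e1, b (eqv.symm j)⟫ = 0 := by
        have := b.orthonormal.2 (fun hh => hj hh.symm : i0 ≠ eqv.symm j)
        simpa only [hbi0] using this
      have hveq : v = ((‖u + v‖ : ℂ)) • e1 - u := by
        rw [he1, smul_smul, mul_inv_cancel₀ hnC, one_smul]
        abel
      have hinner : ⟪v, b (eqv.symm j)⟫ = -⟪u, b (eqv.symm j)⟫ := by
        rw [hveq, inner_sub_left, inner_smul_left, horth, mul_zero, zero_sub]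
      rw [Function.comp_apply, hinner, norm_neg]

theorem stmt_11 {H : Type*} [NormedAddCommGroup H]
    [InnerProductSpace ℂ H] [FiniteDimensional ℂ H]
    (M : ℕ) (W : Fin M → Submodule ℂ H) :
    (∀ x y : H,
      (∀ i, ‖(Submodule.orthogonalProjectionOnto (W i) x : W i)‖ = ‖(Submodule.orthogonalProjectionOnto (W i) y : W i)‖) →
      ∃ c : ℂ, ‖c‖ = 1 ∧ x = c • y)
    ↔ (∀ (J : Fin M → ℕ) (φ : ∀ i, Fin (J i) → H),
        (∀ i j, φ i j ∈ W i) →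
        (∀ i, Orthonormal ℂ (φ i)) →
        (∀ i, Submodule.span ℂ (Set.range (φ i)) = W i) →
        ∀ x y : H, (∀ i j, ‖(inner ℂ x (φ i j) : ℂ)‖ = ‖(inner ℂ y (φ i j) : ℂ)‖) →
          ∃ c : ℂ, ‖c‖ = 1 ∧ x = c • y) := by
  constructor
  · intro hL J φ hmem hon hspan x y hxy
    refine hL x y fun i => ?_
    -- build an orthonormal basis of `W i` from `φ i`
    set ψ : Fin (J i) → W i := fun j => ⟨φ i j, hmem i j⟩ with hψ
    have honψ : Orthonormal ℂ ψ := (hon i).codRestrict (W i) (hmem i)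
    have hspψ : Submodule.span ℂ (Set.range ψ) = ⊤ := by
      apply Submodule.map_injective_of_injective (W i).injective_subtype
      rw [Submodule.map_span, Submodule.map_top, Submodule.range_subtype, ← Set.range_comp]
      exact hspan i
    set B : OrthonormalBasis (Fin (J i)) ℂ (W i) := OrthonormalBasis.mk honψ hspψ.ge with hB
    rw [projNorm (W i) B x, projNorm (W i) B y]
    congr 1
    refine Finset.sum_congr rfl fun j _ => ?_
    have hBj : ((B j : H)) = φ i j := by rw [hB, OrthonormalBasis.coe_mk]
    rw [hBj, hxy i j]
  · intro hR x y hproj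
    choose n b hb using fun i =>
      exists_matched_basis (Submodule.orthogonalProjectionOnto (W i) x) (Submodule.orthogonalProjectionOnto (W i) y)
        (hproj i)
    refine hR n (fun i j => ((b i j : H))) (fun i j => (b i j).2) (fun i => ?_) (fun i => ?_)
      x y (fun i j => ?_)
    · exact ((W i).subtypeₗᵢ.orthonormal_comp_iff).mpr (b i).orthonormal
    · have hsp : Submodule.span ℂ (Set.range (b i)) = ⊤ := by
        rw [← OrthonormalBasis.coe_toBasis (b i)]; exact Module.Basis.span_eq _
      have : Set.range (fun j => ((b i j : H))) = (W i).subtype '' Set.range (b i) := by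
        rw [← Set.range_comp]; rfl
      rw [this, ← Submodule.map_span, hsp, Submodule.map_top, Submodule.range_subtype]
    · calc ‖⟪x, ((b i j : H))⟫‖ = ‖⟪((b i j : H)), x⟫‖ := norm_inner_symm _ _
        _ = ‖⟪b i j, Submodule.orthogonalProjectionOnto (W i) x⟫‖ := by
            rw [Submodule.inner_orthogonalProjectionOnto_eq_of_mem_left]
        _ = ‖⟪Submodule.orthogonalProjectionOnto (W i) x, b i j⟫‖ := norm_inner_symm _ _
        _ = ‖⟪Submodule.orthogonalProjectionOnto (W i) y, b i j⟫‖ := hb i j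
        _ = ‖⟪b i j, Submodule.orthogonalProjectionOnto (W i) y⟫‖ := norm_inner_symm _ _
        _ = ‖⟪((b i j : H)), y⟫‖ := by rw [Submodule.inner_orthogonalProjectionOnto_eq_of_mem_left]
        _ = ‖⟪y, ((b i j : H))⟫‖ := norm_inner_symm _ _
end

section
/- Let {φ_i}_{i=1}^M be a frame for R^N and let k = N − min over all subsets I with span{φ_i}_{i∈I} ≠ R^N of dim(span{φ_i}_{i∈I^c}). Then if {ψ_j}_{j=1}^s ⊆ R^N is any finite family such that {φ_i}_{i=1}^M ∪ {ψ_j}_{j=1}^s has the complement property, then s ≥ k. -/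
theorem stmt_14 (M N k : ℕ) (φ : Fin M → EuclideanSpace ℝ (Fin N))
    (hframe : Submodule.span ℝ (Set.range φ) = ⊤)
    (hkN : k ≤ N)
    (hk : IsLeast {d : ℕ | ∃ I : Finset (Fin M),
        Submodule.span ℝ (φ '' (I : Set (Fin M))) ≠ ⊤ ∧
        Module.finrank ℝ (Submodule.span ℝ (φ '' ((Iᶜ : Finset (Fin M)) : Set (Fin M)))) = d}
      (N - k)) :
    ∀ (s : ℕ) (ψ : Fin s → EuclideanSpace ℝ (Fin N)),
      (∀ S : Finset (Fin M ⊕ Fin s),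
        Submodule.span ℝ (Sum.elim φ ψ '' (S : Set (Fin M ⊕ Fin s))) = ⊤ ∨
        Submodule.span ℝ (Sum.elim φ ψ '' ((Sᶜ : Finset (Fin M ⊕ Fin s)) : Set (Fin M ⊕ Fin s))) = ⊤) →
      k ≤ s := by
  intro s ψ hcp
  by_contra h
  push_neg at h
  obtain ⟨⟨I, hI, hIc⟩, _⟩ := hk
  set S : Finset (Fin M ⊕ Fin s) := I.map ⟨Sum.inl, Sum.inl_injective⟩ with hS
  have hScoe : (S : Set (Fin M ⊕ Fin s)) = Sum.inl '' (I : Set (Fin M)) := by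
    simp [hS, Finset.coe_map]
  have himg : Sum.elim φ ψ '' (S : Set (Fin M ⊕ Fin s)) = φ '' (I : Set (Fin M)) := by
    rw [hScoe, ← Set.image_comp]
    rfl
  have h1 : Submodule.span ℝ (Sum.elim φ ψ '' (S : Set (Fin M ⊕ Fin s))) ≠ ⊤ := by
    rw [himg]; exact hI
  have h2 := (hcp S).resolve_left h1
  -- complement image is contained in φ '' Iᶜ ∪ range ψ
  have hsub : Sum.elim φ ψ '' ((Sᶜ : Finset (Fin M ⊕ Fin s)) : Set (Fin M ⊕ Fin s)) ⊆
      (φ '' ((Iᶜ : Finset (Fin M)) : Set (Fin M))) ∪ Set.range ψ := by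
    rintro x ⟨y, hy, rfl⟩
    cases y with
    | inl i =>
      left
      refine ⟨i, ?_, rfl⟩
      simp only [Finset.coe_compl, Set.mem_compl_iff, Finset.mem_coe] at hy ⊢
      intro hi
      exact hy (by simp [hS, hi])
    | inr j => exact Or.inr ⟨j, rfl⟩
  have hle : (⊤ : Submodule ℝ (EuclideanSpace ℝ (Fin N))) ≤
      Submodule.span ℝ (φ '' ((Iᶜ : Finset (Fin M)) : Set (Fin M))) ⊔
        Submodule.span ℝ (Set.range ψ) := by
    rw [← h2, ← Submodule.span_union]
    exact Submodule.span_mono hsub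
  have hN : Module.finrank ℝ (EuclideanSpace ℝ (Fin N)) = N := by
    simp [finrank_euclideanSpace_fin]
  have hrank := Submodule.finrank_add_le_finrank_add_finrank
    (Submodule.span ℝ (φ '' ((Iᶜ : Finset (Fin M)) : Set (Fin M))))
    (Submodule.span ℝ (Set.range ψ))
  have htop : Submodule.span ℝ (φ '' ((Iᶜ : Finset (Fin M)) : Set (Fin M))) ⊔
      Submodule.span ℝ (Set.range ψ) = ⊤ := top_le_iff.mp hle
  rw [htop, finrank_top, hN, hIc] at hrank
  have hψ : Module.finrank ℝ (Submodule.span ℝ (Set.range ψ)) ≤ s :=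
    (finrank_range_le_card ψ).trans (by simp)
  omega
end

section
/- Let {W_i}_{i=1}^M be subspaces of R^N which yield phase retrieval, but such that removing any single subspace destroys phase retrieval. Fix I ⊆ {1,...,M} with |I| = M−1, let {f_{i,j}}_{j=1}^{d_i} be orthonormal bases of W_i for i ∈ I, and suppose the index set is partitioned into I_1 and I_2 such that neither {f_{i,j}}_{(i,j)∈I_1} nor {f_{i,j}}_{(i,j)∈I_2} spans R^N. Then dim(span{f_{i,j}}_{(i,j)∈I_1}) = dim(span{f_{i,j}}_{(i,j)∈I_2}) = N−1. -/
open Module Submodule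

private lemma stmt17_inner_proj {H : Type*} [NormedAddCommGroup H] [InnerProductSpace ℝ H]
    [FiniteDimensional ℝ H] (K : Submodule ℝ H) (x u : H) (hu : u ∈ K) :
    (inner ℝ ((K.orthogonalProjectionOnto x : H)) u : ℝ) = inner ℝ x u := by
  rw [← starProjection_apply, inner_starProjection_left_eq_right, starProjection_eq_self_iff.mpr hu]

private lemma stmt17_inner_proj_proj {H : Type*} [NormedAddCommGroup H]
    [InnerProductSpace ℝ H] [FiniteDimensional ℝ H] (K : Submodule ℝ H) (u v : H) :
    (inner ℝ ((K.orthogonalProjectionOnto u : H)) ((K.orthogonalProjectionOnto v : H)) : ℝ)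
      = inner ℝ u ((K.orthogonalProjectionOnto v : H)) := by
  rw [← starProjection_apply, ← starProjection_apply, inner_starProjection_left_eq_right,
    starProjection_eq_self_iff.mpr (K.starProjection_apply_mem v)]

private lemma stmt17_norm_eq {H : Type*} [NormedAddCommGroup H] [InnerProductSpace ℝ H]
    [FiniteDimensional ℝ H] (K : Submodule ℝ H) (a b : H)
    (h : (inner ℝ ((K.orthogonalProjectionOnto a : H)) ((K.orthogonalProjectionOnto b : H)) : ℝ) = 0) :
    ‖(K.orthogonalProjectionOnto (a + b) : K)‖ = ‖(K.orthogonalProjectionOnto (a - b) : K)‖ := by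
  have e1 : ((K.orthogonalProjectionOnto (a + b) : K) : H)
      = (K.orthogonalProjectionOnto a : H) + (K.orthogonalProjectionOnto b : H) := by
    rw [map_add]; rfl
  have e2 : ((K.orthogonalProjectionOnto (a - b) : K) : H)
      = (K.orthogonalProjectionOnto a : H) - (K.orthogonalProjectionOnto b : H) := by
    rw [map_sub]; rfl
  rw [Submodule.coe_norm, Submodule.coe_norm, e1, e2]
  have hsq : ‖(K.orthogonalProjectionOnto a : H) + (K.orthogonalProjectionOnto b : H)‖ ^ 2
      = ‖(K.orthogonalProjectionOnto a : H) - (K.orthogonalProjectionOnto b : H)‖ ^ 2 := by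
    rw [norm_add_sq_real, norm_sub_sq_real, h]; ring
  have := (sq_eq_sq_iff_abs_eq_abs _ _).mp hsq
  rwa [abs_of_nonneg (norm_nonneg _), abs_of_nonneg (norm_nonneg _)] at this

theorem stmt_17 {H : Type*} [NormedAddCommGroup H] [InnerProductSpace ℝ H]
    [FiniteDimensional ℝ H]
    (N M : ℕ) (hdim : Module.finrank ℝ H = N)
    (W : Fin M → Submodule ℝ H)
    (hpr : ∀ x y : H,
      (∀ i, ‖((W i).orthogonalProjectionOnto x : W i)‖ = ‖((W i).orthogonalProjectionOnto y : W i)‖) →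
      x = y ∨ x = -y)
    (hfail : ∀ m : Fin M, ¬ (∀ x y : H,
      (∀ i, i ≠ m →
        ‖((W i).orthogonalProjectionOnto x : W i)‖ = ‖((W i).orthogonalProjectionOnto y : W i)‖) →
      x = y ∨ x = -y))
    (m : Fin M) (d : {i : Fin M // i ≠ m} → ℕ)
    (f : ∀ i : {i : Fin M // i ≠ m}, Fin (d i) → H)
    (hmem : ∀ i j, f i j ∈ W i.1)
    (horth : ∀ i, Orthonormal ℝ (f i))
    (hspan : ∀ i, Submodule.span ℝ (Set.range (f i)) = W (i : Fin M))
    (S : Set (Σ i : {i : Fin M // i ≠ m}, Fin (d i)))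
    (h₁ : Submodule.span ℝ ((fun p : Σ i : {i : Fin M // i ≠ m}, Fin (d i) => f p.1 p.2) '' S) ≠ ⊤)
    (h₂ : Submodule.span ℝ ((fun p : Σ i : {i : Fin M // i ≠ m}, Fin (d i) => f p.1 p.2) '' Sᶜ) ≠ ⊤) :
    Module.finrank ℝ
        (Submodule.span ℝ ((fun p : Σ i : {i : Fin M // i ≠ m}, Fin (d i) => f p.1 p.2) '' S))
      = N - 1 ∧
    Module.finrank ℝ
        (Submodule.span ℝ ((fun p : Σ i : {i : Fin M // i ≠ m}, Fin (d i) => f p.1 p.2) '' Sᶜ))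
      = N - 1 := by
  classical
  set F : (Σ i : {i : Fin M // i ≠ m}, Fin (d i)) → H := fun p => f p.1 p.2 with hF
  -- inner ℝ product of projections as a sum over the orthonormal basis
  have hsum : ∀ (i : {i : Fin M // i ≠ m}) (x y : H),
      (inner ℝ (((W i.1).orthogonalProjectionOnto x : H)) (((W i.1).orthogonalProjectionOnto y : H)) : ℝ)
        = ∑ j, (inner ℝ (f i j) x : ℝ) * (inner ℝ (f i j) y : ℝ) := by
    intro i x y
    set K := W i.1 with hK
    let g : Fin (d i) → K := fun j => ⟨f i j, hmem i j⟩
    have hg : Orthonormal ℝ g := by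
      constructor
      · intro j
        have := (horth i).1 j
        simpa [g] using this
      · intro j k h
        have := (horth i).2 h
        simpa [g, Submodule.coe_inner] using this
    have hgspan : ⊤ ≤ Submodule.span ℝ (Set.range g) := by
      have hmap : Submodule.map K.subtype (Submodule.span ℝ (Set.range g))
          = Submodule.map K.subtype ⊤ := by
        rw [Submodule.map_span, Submodule.map_top, Submodule.range_subtype]
        have himg : K.subtype '' Set.range g = Set.range (f i) := by
          ext z
          simp only [Set.mem_image, Set.mem_range]
          constructor
          · rintro ⟨w, ⟨j, rfl⟩, rfl⟩; exact ⟨j, rfl⟩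
          · rintro ⟨j, rfl⟩; exact ⟨g j, ⟨j, rfl⟩, rfl⟩
        rw [himg, hspan i]
      exact le_of_eq (Submodule.map_injective_of_injective K.injective_subtype hmap).symm
    let b : OrthonormalBasis (Fin (d i)) ℝ K := OrthonormalBasis.mk hg hgspan
    have hb : ∀ j, b j = g j := fun j => by simp [b]
    have key := b.sum_inner_mul_inner (K.orthogonalProjectionOnto x) (K.orthogonalProjectionOnto y)
    have hL : ∀ j, (inner ℝ (K.orthogonalProjectionOnto x) (b j) : ℝ) = (inner ℝ (f i j) x : ℝ) := by
      intro j
      rw [hb, Submodule.coe_inner]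
      have : ((g j : K) : H) = f i j := rfl
      rw [this, stmt17_inner_proj K x (f i j) (hmem i j)]
      exact real_inner_comm _ _
    have hR : ∀ j, (inner ℝ (b j) (K.orthogonalProjectionOnto y) : ℝ) = (inner ℝ (f i j) y : ℝ) := by
      intro j
      rw [hb, real_inner_comm, Submodule.coe_inner]
      have : ((g j : K) : H) = f i j := rfl
      rw [this, stmt17_inner_proj K y (f i j) (hmem i j)]
      exact real_inner_comm _ _
    calc (inner ℝ ((K.orthogonalProjectionOnto x : H)) ((K.orthogonalProjectionOnto y : H)) : ℝ)
        = (inner ℝ (K.orthogonalProjectionOnto x) (K.orthogonalProjectionOnto y) : ℝ) :=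
          (K.coe_inner _ _).symm
      _ = ∑ j, (inner ℝ (K.orthogonalProjectionOnto x) (b j) : ℝ)
            * (inner ℝ (b j) (K.orthogonalProjectionOnto y) : ℝ) := key.symm
      _ = ∑ j, (inner ℝ (f i j) x : ℝ) * (inner ℝ (f i j) y : ℝ) := by
          refine Finset.sum_congr rfl fun j _ => ?_
          rw [hL j, hR j]
  -- key lemma
  have key : ∀ A B : Set (Σ i : {i : Fin M // i ≠ m}, Fin (d i)), (∀ p, p ∈ A ∨ p ∈ B) →
      Submodule.span ℝ (F '' A) ≠ ⊤ → Submodule.span ℝ (F '' B) ≠ ⊤ →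
      N - 1 ≤ Module.finrank ℝ (Submodule.span ℝ (F '' A)) := by
    intro A B hAB hA hB
    by_contra hlt
    push_neg at hlt
    set VA := (Submodule.span ℝ (F '' A))ᗮ with hVAdef
    have hVA : 2 ≤ Module.finrank ℝ VA := by
      have h : Module.finrank ℝ (Submodule.span ℝ (F '' A)) + Module.finrank ℝ VA = N := by
        rw [hVAdef, ← hdim]
        exact (Submodule.span ℝ (F '' A)).finrank_add_finrank_orthogonal
      have hNle : Module.finrank ℝ (Submodule.span ℝ (F '' A)) < N := by
        rw [← hdim]; exact Submodule.finrank_lt (hA)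
      omega
    obtain ⟨v, hvB, hv0⟩ : ∃ v, v ∈ (Submodule.span ℝ (F '' B))ᗮ ∧ v ≠ 0 := by
      apply Submodule.exists_mem_ne_zero_of_ne_bot
      simpa [Submodule.orthogonal_eq_bot_iff] using hB
    set w : H := ((W m).orthogonalProjectionOnto v : H) with hw
    let φ : VA →ₗ[ℝ] ℝ := (innerSL ℝ w).toLinearMap.comp VA.subtype
    have hker : LinearMap.ker φ ≠ ⊥ := by
      intro hbot
      have h1 := φ.finrank_range_add_finrank_ker
      rw [hbot, finrank_bot] at h1
      have h2 : Module.finrank ℝ (LinearMap.range φ) ≤ 1 := by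
        have := (LinearMap.range φ).finrank_le
        simpa using this
      omega
    obtain ⟨u0, hu0mem, hu0ne⟩ := Submodule.exists_mem_ne_zero_of_ne_bot hker
    set u : H := (u0 : H) with hu
    have huVA : u ∈ VA := u0.2
    have huw : (inner ℝ w u : ℝ) = 0 := by
      have : φ u0 = 0 := hu0mem
      simpa [φ] using this
    have hune : u ≠ 0 := fun h => hu0ne (Subtype.coe_injective h)
    have horthA : ∀ p ∈ A, (inner ℝ (F p) u : ℝ) = 0 := by
      intro p hp
      exact huVA _ (Submodule.subset_span ⟨p, hp, rfl⟩)
    have horthB : ∀ p ∈ B, (inner ℝ (F p) v : ℝ) = 0 := by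
      intro p hp
      exact hvB _ (Submodule.subset_span ⟨p, hp, rfl⟩)
    have hmeas : ∀ i, ‖((W i).orthogonalProjectionOnto (u + v) : W i)‖
        = ‖((W i).orthogonalProjectionOnto (u - v) : W i)‖ := by
      intro i
      apply stmt17_norm_eq
      by_cases him : i = m
      · subst him
        rw [stmt17_inner_proj_proj, real_inner_comm]
        exact huw
      · rw [hsum ⟨i, him⟩ u v]
        apply Finset.sum_eq_zero
        intro j _
        rcases hAB ⟨⟨i, him⟩, j⟩ with hp | hp
        · rw [horthA _ hp]; ring
        · rw [horthB _ hp]; ring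
    rcases hpr (u + v) (u - v) hmeas with h | h
    · have h2 : (u + v) - (u - v) = 0 := by rw [h]; simp
      have h3 : (2 : ℝ) • v = 0 := by rw [two_smul, ← h2]; abel
      rcases smul_eq_zero.mp h3 with h4 | h4
      · norm_num at h4
      · exact hv0 h4
    · have h2 : (u + v) + (u - v) = 0 := by rw [h]; simp
      have h3 : (2 : ℝ) • u = 0 := by rw [two_smul, ← h2]; abel
      rcases smul_eq_zero.mp h3 with h4 | h4
      · norm_num at h4
      · exact hune h4
  have e1 := key S Sᶜ (fun p => em _) h₁ h₂
  have e2 := key Sᶜ S (fun p => (em (p ∈ S)).symm) h₂ h₁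
  have lt1 : Module.finrank ℝ (Submodule.span ℝ (F '' S)) < N := by
    rw [← hdim]; exact Submodule.finrank_lt (h₁)
  have lt2 : Module.finrank ℝ (Submodule.span ℝ (F '' Sᶜ)) < N := by
    rw [← hdim]; exact Submodule.finrank_lt (h₂)
  exact ⟨by omega, by omega⟩
end

section
/- Let {f_i}_{i=1}^M be vectors in R^N with the property that whenever {1,...,M} is partitioned into I_1 and I_2 with neither {f_i}_{i∈I_1} nor {f_i}_{i∈I_2} spanning R^N, each of the two families spans a hyperplane (an (N−1)-dimensional subspace). Then there exists a vector f_0 ∈ R^N such that {f_0, f_1,...,f_M} has the complement property (and hence does phase retrieval in R^N). -/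
open Classical in
private lemma avoid (M N : ℕ) (hN : 0 < N) (f : Fin M → EuclideanSpace ℝ (Fin N)) :
    ∃ x : EuclideanSpace ℝ (Fin N), ∀ T : Finset (Fin M),
      Submodule.span ℝ (f '' (T : Set (Fin M))) ≠ ⊤ →
      x ∉ Submodule.span ℝ (f '' (T : Set (Fin M))) := by
  haveI : Nontrivial (EuclideanSpace ℝ (Fin N)) := by
    have : Nonempty (Fin N) := ⟨⟨0, hN⟩⟩
    exact inferInstance
  set p : Finset (Fin M) → Subspace ℝ (EuclideanSpace ℝ (Fin N)) := fun T =>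
    if Submodule.span ℝ (f '' (T : Set (Fin M))) = ⊤ then ⊥
    else Submodule.span ℝ (f '' (T : Set (Fin M))) with hp
  have hne : ∀ T, p T ≠ ⊤ := by
    intro T
    by_cases h : Submodule.span ℝ (f '' (T : Set (Fin M))) = ⊤
    · simpa [hp, h] using bot_ne_top
    · simpa [hp, h] using h
  have hcov : ⋃ T, (p T : Set (EuclideanSpace ℝ (Fin N))) ≠ Set.univ := by
    intro h
    obtain ⟨T, hT⟩ := Subspace.exists_eq_top_of_iUnion_eq_univ h
    exact hne T hT
  obtain ⟨x, hx⟩ : ∃ x, x ∉ ⋃ T, (p T : Set (EuclideanSpace ℝ (Fin N))) := by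
    by_contra h
    push_neg at h
    exact hcov (Set.eq_univ_of_forall h)
  refine ⟨x, fun T hT hxT => ?_⟩
  exact hx (Set.mem_iUnion.mpr ⟨T, by simpa [hp, hT] using hxT⟩)

private lemma cons_sub1 {M N : ℕ} (x : EuclideanSpace ℝ (Fin N))
    (f : Fin M → EuclideanSpace ℝ (Fin N)) (A : Set (Fin (M + 1))) :
    f '' (Fin.succ ⁻¹' A) ⊆ Fin.cons x f '' A := by
  rintro y ⟨i, hi, rfl⟩
  exact ⟨i.succ, hi, by simp⟩

private lemma zero_case {M N : ℕ} (hN : 0 < N) (f : Fin M → EuclideanSpace ℝ (Fin N))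
    (hhyp : ∀ S : Finset (Fin M),
      Submodule.span ℝ (f '' (S : Set (Fin M))) ≠ ⊤ →
      Submodule.span ℝ (f '' ((Sᶜ : Finset (Fin M)) : Set (Fin M))) ≠ ⊤ →
      Module.finrank ℝ (Submodule.span ℝ (f '' (S : Set (Fin M)))) = N - 1 ∧
      Module.finrank ℝ (Submodule.span ℝ (f '' ((Sᶜ : Finset (Fin M)) : Set (Fin M)))) = N - 1)
    (x : EuclideanSpace ℝ (Fin N))
    (hx : ∀ T : Finset (Fin M),
      Submodule.span ℝ (f '' (T : Set (Fin M))) ≠ ⊤ →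
      x ∉ Submodule.span ℝ (f '' (T : Set (Fin M))))
    (S : Finset (Fin (M + 1))) (h0 : (0 : Fin (M + 1)) ∈ S)
    (hS : Submodule.span ℝ (Fin.cons x f '' (S : Set (Fin (M + 1)))) ≠ ⊤)
    (hSc : Submodule.span ℝ (Fin.cons x f '' ((Sᶜ : Finset (Fin (M + 1))) : Set (Fin (M + 1)))) ≠ ⊤) :
    False := by
  set T : Finset (Fin M) := S.preimage Fin.succ (Fin.succ_injective M).injOn with hT
  have hTc : (↑T : Set (Fin M)) = Fin.succ ⁻¹' (↑S : Set (Fin (M + 1))) :=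
    Finset.coe_preimage _ _
  have hTcc : ((↑(Tᶜ) : Set (Fin M))) = Fin.succ ⁻¹' ((↑(Sᶜ) : Set (Fin (M + 1)))) := by
    rw [Finset.coe_compl, Finset.coe_compl, hTc, ← Set.preimage_compl]
  set P := Submodule.span ℝ (f '' (↑T : Set (Fin M))) with hP
  set Q := Submodule.span ℝ (Fin.cons x f '' (↑S : Set (Fin (M + 1)))) with hQ
  have hPQ : P ≤ Q := by
    rw [hP, hTc]
    exact Submodule.span_mono (cons_sub1 x f _)
  have hPne : P ≠ ⊤ := fun h => hS (top_le_iff.mp (h ▸ hPQ))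
  have hPcne : Submodule.span ℝ (f '' ((↑(Tᶜ)) : Set (Fin M))) ≠ ⊤ := by
    intro h
    apply hSc
    rw [hTcc] at h
    exact top_le_iff.mp (h ▸ Submodule.span_mono (cons_sub1 x f _))
  obtain ⟨hr1, _⟩ := hhyp T hPne hPcne
  have hxP : x ∉ P := hx T hPne
  have hxQ : x ∈ Q := Submodule.subset_span ⟨0, h0, by simp⟩
  have hlt : P < Q := lt_of_le_of_ne hPQ (fun h => hxP (h ▸ hxQ))
  have h1 : Module.finrank ℝ P < Module.finrank ℝ Q :=
    Submodule.finrank_lt_finrank_of_lt hlt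
  have h2 : Module.finrank ℝ Q ≤ N := by
    have := Submodule.finrank_le Q
    rwa [finrank_euclideanSpace_fin] at this
  have h3 : Module.finrank ℝ P = N - 1 := hr1
  have hQN : Module.finrank ℝ Q = N := by omega
  exact hS (Submodule.eq_top_of_finrank_eq (by rw [hQN, finrank_euclideanSpace_fin]))

theorem stmt_18 (M N : ℕ) (f : Fin M → EuclideanSpace ℝ (Fin N))
    (hhyp : ∀ S : Finset (Fin M),
      Submodule.span ℝ (f '' (S : Set (Fin M))) ≠ ⊤ →
      Submodule.span ℝ (f '' ((Sᶜ : Finset (Fin M)) : Set (Fin M))) ≠ ⊤ →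
      Module.finrank ℝ (Submodule.span ℝ (f '' (S : Set (Fin M)))) = N - 1 ∧
      Module.finrank ℝ (Submodule.span ℝ (f '' ((Sᶜ : Finset (Fin M)) : Set (Fin M)))) = N - 1) :
    ∃ f₀ : EuclideanSpace ℝ (Fin N),
      ∀ S : Finset (Fin (M + 1)),
        Submodule.span ℝ (Fin.cons f₀ f '' (S : Set (Fin (M + 1)))) = ⊤ ∨
        Submodule.span ℝ (Fin.cons f₀ f '' ((Sᶜ : Finset (Fin (M + 1))) : Set (Fin (M + 1)))) = ⊤ := by
  rcases Nat.eq_zero_or_pos N with hN | hN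
  · subst hN
    haveI : Subsingleton (EuclideanSpace ℝ (Fin 0)) :=
      ⟨fun a b => PiLp.ext fun i => i.elim0⟩
    exact ⟨0, fun S => Or.inl (Subsingleton.elim _ _)⟩
  obtain ⟨x, hx⟩ := avoid M N hN f
  refine ⟨x, fun S => ?_⟩
  by_contra h
  push_neg at h
  obtain ⟨hS, hSc⟩ := h
  by_cases h0 : (0 : Fin (M + 1)) ∈ S
  · exact zero_case hN f hhyp x hx S h0 hS hSc
  · have h0c : (0 : Fin (M + 1)) ∈ Sᶜ := Finset.mem_compl.mpr h0
    exact zero_case hN f hhyp x hx Sᶜ h0c hSc (by rwa [compl_compl])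
end
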